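/- Let n ≥ 3, let k : ℝ → ℝ³ be continuous of period 1, injective on [0,1), with k(0) = 0, and set d(s,t) = ‖k(s) − k(t)‖. Suppose ε > 0 and 0 = a₀ < a₁ < ⋯ < a_{n-1} < 1 satisfy: d(a_{i-1}, a_i) = ε for i = 1, …, n−1; the function t ↦ d(0,t) is strictly increasing on [0, a_{n-1}] (so δ := d(0, a_{n-1}) > ε); for each i = 1, …, n−2, if t ∈ [0,1) and d(a_i, t) = ε then t ∈ {a_{i-1}, a_{i+1}}. Suppose p ∈ (a_{n-1}, 1) satisfies d(0,p) < ε and d(0,t) ≥ d(0,p) for all t ∈ [a₁, p]. Let B = {(t₁, …, t_{n-1}) : a₁ ≤ t₁ ≤ ⋯ ≤ t_{n-1} ≤ p} ⊂ ℝ^{n-1}, and define φ : B → ℝⁿ by φ(t)_i = d(t_{i-1}, t_i) for i = 1, …, n, where t₀ := 0 and t_n := 1 (so φ(t)_n = d(t_{n-1}, 0) by periodicity). Let ψ₁ : ℝⁿ → ℝⁿ be the orthogonal projection ψ₁(y) = y − ((Σᵢ yᵢ)/n)·e onto the hyperplane P = {z : Σ zᵢ = 0}, where e = (1, …, 1), let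 ψ₂(z) = z/‖z‖ for z ≠ 0, and set g = ψ₂ ∘ ψ₁ ∘ φ wherever defined. Let a = (a₁, …, a_{n-1}) and assume ψ₁(φ(t)) ≠ 0 for all t ∈ ∂B. Then for every t in the boundary ∂B of the simplex B, g(t) = g(a) implies t = a. -/
import Mathlib


/-- **Lemma 3** of the paper. With `k` a continuous closed curve of period 1,
injective on `[0,1)`, `k 0 = 0`, an `ε`-chain `0 = a₀ < a₁ < ⋯ < a_{n-1} < 1`
as in Lemma 2, and `p ∈ (a_{n-1}, 1)` with `d(0,p) < ε` and
`d(0,t) ≥ d(0,p)` on `[a₁,p]`, consider the simplex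
`B = {a₁ ≤ t₁ ≤ ⋯ ≤ t_{n-1} ≤ p}`, its boundary `∂B` (the union of the faces
`{t₁ = a₁}`, `{t_{i-1} = t_i}`, `{t_{n-1} = p}`), the chord-length map `φ`
with `φ(t)ᵢ = d(t_{i-1}, t_i)` (`t₀ := 0`, `t_n := 1`), the orthogonal
projection `ψ₁` onto the hyperplane `{Σ zᵢ = 0}`, and `g = ψ₂ ∘ ψ₁ ∘ φ` with
`ψ₂` the radial projection to the unit sphere. If `ψ₁(φ t) ≠ 0` on `∂B`,
then the only point `t ∈ ∂B` with `g t = g a` is `t = a` itself. -/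
theorem boundary_map_value_only_at_chain_point
    (n : ℕ) (hn : 3 ≤ n)
    (k : ℝ → EuclideanSpace ℝ (Fin 3))
    (hk : Continuous k)
    (hper : ∀ t : ℝ, k (t + 1) = k t)
    (hinj : Set.InjOn k (Set.Ico (0 : ℝ) 1))
    (hk0 : k 0 = 0)
    (ε : ℝ) (hε : 0 < ε)
    (a : ℕ → ℝ) (ha0 : a 0 = 0)
    (hamono : ∀ i < n - 1, a i < a (i + 1))
    (halt : a (n - 1) < 1)
    (hchain : ∀ i < n - 1, ‖k (a i) - k (a (i + 1))‖ = ε)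
    (hincr : StrictMonoOn (fun t => ‖k t - k 0‖) (Set.Icc 0 (a (n - 1))))
    (hδ : ε < ‖k (a (n - 1)) - k 0‖)
    (huniq : ∀ i, 1 ≤ i → i ≤ n - 2 → ∀ t ∈ Set.Ico (0 : ℝ) 1,
      ‖k (a i) - k t‖ = ε → t = a (i - 1) ∨ t = a (i + 1))
    (p : ℝ) (hp1 : a (n - 1) < p) (hp2 : p < 1)
    (hpε : ‖k p - k 0‖ < ε)
    (hpmin : ∀ t ∈ Set.Icc (a 1) p, ‖k p - k 0‖ ≤ ‖k t - k 0‖)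
    -- the simplex `B` (in coordinates `t 1, …, t (n-1)`) and its boundary
    (B : Set (ℕ → ℝ))
    (hB : B = {t : ℕ → ℝ | a 1 ≤ t 1 ∧
      (∀ i, 2 ≤ i → i ≤ n - 1 → t (i - 1) ≤ t i) ∧ t (n - 1) ≤ p})
    (bdryB : Set (ℕ → ℝ))
    (hbdryB : bdryB = {t ∈ B | t 1 = a 1 ∨
      (∃ i, 2 ≤ i ∧ i ≤ n - 1 ∧ t (i - 1) = t i) ∨ t (n - 1) = p})
    -- the chord length map `φ`, with the conventions `t₀ = 0`, `t_n = 1`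
    (φ : (ℕ → ℝ) → EuclideanSpace ℝ (Fin n))
    (hφ : ∀ t : ℕ → ℝ, φ t = fun j : Fin n =>
      ‖k (if (j : ℕ) = 0 then 0 else t j) -
        k (if (j : ℕ) + 1 = n then 1 else t ((j : ℕ) + 1))‖)
    -- the orthogonal projection onto the hyperplane `P = {Σ zᵢ = 0}`
    (ψ₁ : EuclideanSpace ℝ (Fin n) → EuclideanSpace ℝ (Fin n))
    (hψ₁ : ∀ y, ψ₁ y = fun j : Fin n => y j - (∑ i, y i) / n)
    -- `g = ψ₂ ∘ ψ₁ ∘ φ`, where `ψ₂ z = z / ‖z‖`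
    (g : (ℕ → ℝ) → EuclideanSpace ℝ (Fin n))
    (hg : ∀ t, g t = ‖ψ₁ (φ t)‖⁻¹ • ψ₁ (φ t))
    (hnz : ∀ t ∈ bdryB, ψ₁ (φ t) ≠ 0) :
    ∀ t ∈ bdryB, g t = g a → ∀ i, 1 ≤ i → i ≤ n - 1 → t i = a i := by
  intro t ht hgt
  have h0n : 0 < n := by omega
  have hk1 : k 1 = k 0 := by simpa using hper 0
  have ha1pos : 0 < a 1 := by
    have h := hamono 0 (by omega); rw [ha0] at h; exact h
  -- strict monotonicity of the chain
  have haij : ∀ i j : ℕ, i < j → j ≤ n - 1 → a i < a j := by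
    intro i j hij hj
    induction j with
    | zero => omega
    | succ m ih =>
      rcases Nat.lt_or_ge i m with h | h
      · exact lt_trans (ih h (by omega)) (hamono m (by omega))
      · have : i = m := by omega
        subst this
        exact hamono i (by omega)
  have haB : a ∈ bdryB := by
    rw [hbdryB]
    refine ⟨?_, Or.inl rfl⟩
    rw [hB]
    refine ⟨le_refl _, ?_, le_of_lt hp1⟩
    intro i h2 hi
    exact le_of_lt (haij (i - 1) i (by omega) hi)
  have ht' := ht
  rw [hbdryB] at ht'
  obtain ⟨htB, hface⟩ := ht'
  rw [hB] at htB
  obtain ⟨ht1, htmono, htp⟩ := htB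
  -- monotonicity of t on indices 1..n-1
  have htle : ∀ j, j ≤ n - 1 → ∀ i, 1 ≤ i → i ≤ j → t i ≤ t j := by
    intro j
    induction j with
    | zero => intro _ i h1 h2; omega
    | succ m ih =>
      intro hj i h1 hij
      rcases Nat.lt_or_ge i (m + 1) with h | h
      · have h2 : t i ≤ t m := ih (by omega) i h1 (by omega)
        have h3 : t m ≤ t (m + 1) := by
          simpa using htmono (m + 1) (by omega) (by omega)
        linarith
      · have : i = m + 1 := by omega
        subst this; exact le_refl _
  have ht1p : t 1 ≤ p :=
    le_trans (htle (n - 1) (le_refl _) 1 (le_refl _) (by omega)) htp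
  -- components of φ a
  have hφa0 : ∀ (j : ℕ) (hj : j < n), j ≠ n - 1 → φ a ⟨j, hj⟩ = ε := by
    intro j hj hjne
    rw [hφ]
    show ‖k (if j = 0 then 0 else a j) - k (if j + 1 = n then 1 else a (j + 1))‖ = ε
    rw [if_neg (by omega : ¬(j + 1 = n))]
    by_cases h0 : j = 0
    · subst h0
      rw [if_pos rfl, ← ha0]
      exact hchain 0 (by omega)
    · rw [if_neg h0]
      exact hchain j (by omega)
  have hφan : φ a ⟨n - 1, by omega⟩ = ‖k (a (n - 1)) - k 0‖ := by
    rw [hφ]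
    show ‖k (if n - 1 = 0 then 0 else a (n - 1)) -
        k (if (n - 1) + 1 = n then 1 else a ((n - 1) + 1))‖ = _
    rw [if_neg (by omega), if_pos (by omega), hk1]
  -- components of φ t
  have hφt : ∀ (j : ℕ) (hj : j < n), φ t ⟨j, hj⟩ =
      ‖k (if j = 0 then 0 else t j) - k (if j + 1 = n then 1 else t (j + 1))‖ := by
    intro j hj
    rw [hφ]
  have hc0 : φ t ⟨0, h0n⟩ = ‖k 0 - k (t 1)‖ := by
    rw [hφt 0 h0n, if_pos rfl, if_neg (by omega)]
  -- the scalar relation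
  have hune := hnz t ht
  have hvne := hnz a haB
  have hnu : (0 : ℝ) < ‖ψ₁ (φ t)‖ := norm_pos_iff.mpr hune
  have hnv : (0 : ℝ) < ‖ψ₁ (φ a)‖ := norm_pos_iff.mpr hvne
  set lam : ℝ := ‖ψ₁ (φ t)‖ * ‖ψ₁ (φ a)‖⁻¹ with hlam
  have hlampos : 0 < lam := mul_pos hnu (inv_pos.mpr hnv)
  have hu : ψ₁ (φ t) = lam • ψ₁ (φ a) := by
    have h1 : ψ₁ (φ t) = ‖ψ₁ (φ t)‖ • g t := by
      rw [hg, smul_smul, mul_inv_cancel₀ (ne_of_gt hnu), one_smul]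
    rw [hgt, hg, smul_smul] at h1
    exact h1
  have hcomp : ∀ j : Fin n,
      φ t j - (∑ i, φ t i) / n = lam * (φ a j - (∑ i, φ a i) / n) := by
    intro j
    have h2 : ψ₁ (φ t) j = (lam • ψ₁ (φ a)) j := by rw [hu]
    have h3 : (lam • ψ₁ (φ a)) j = lam * ψ₁ (φ a) j := rfl
    rw [h3] at h2
    simp only [hψ₁] at h2
    exact h2
  have key : ∀ j : Fin n,
      φ t j - φ t ⟨0, h0n⟩ = lam * (φ a j - φ a ⟨0, h0n⟩) := by
    intro j
    have h1 := hcomp j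
    have h2 := hcomp ⟨0, h0n⟩
    have h3 : lam * (φ a j - φ a ⟨0, h0n⟩) =
        lam * (φ a j - (∑ i, φ a i) / n) - lam * (φ a ⟨0, h0n⟩ - (∑ i, φ a i) / n) := by
      ring
    linarith [h1, h2, h3]
  -- equal chords
  have hch : ∀ j : ℕ, 1 ≤ j → j ≤ n - 2 →
      ‖k (t j) - k (t (j + 1))‖ = ‖k 0 - k (t 1)‖ := by
    intro j h1 h2
    have hj : j < n := by omega
    have hkey := key ⟨j, hj⟩
    rw [hφa0 j hj (by omega), hφa0 0 h0n (by omega), hc0, hφt j hj,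
      if_neg (by omega), if_neg (by omega)] at hkey
    linarith
  have hlast : ‖k (t (n - 1)) - k 0‖ =
      ‖k 0 - k (t 1)‖ + lam * (‖k (a (n - 1)) - k 0‖ - ε) := by
    have hj : n - 1 < n := by omega
    have hkey := key ⟨n - 1, hj⟩
    rw [hφan, hφa0 0 h0n (by omega), hc0, hφt (n - 1) hj,
      if_neg (by omega), if_pos (by omega), hk1] at hkey
    linarith
  -- rule out the other faces: t 1 = a 1
  have ht1a : t 1 = a 1 := by
    rcases hface with h | h | h
    · exact h
    · exfalso
      obtain ⟨i, h2i, hin, heq⟩ := h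
      have hchord : ‖k (t (i - 1)) - k (t ((i - 1) + 1))‖ = ‖k 0 - k (t 1)‖ :=
        hch (i - 1) (by omega) (by omega)
      rw [show (i - 1) + 1 = i from by omega, heq, sub_self, norm_zero] at hchord
      have hkt1 : k (t 1) = k 0 := by
        have : ‖k 0 - k (t 1)‖ = 0 := hchord.symm
        have := norm_eq_zero.mp this
        have := sub_eq_zero.mp this
        exact this.symm
      have ht10 : t 1 = 0 := hinj ⟨by linarith, by linarith⟩
        ⟨le_refl _, by norm_num⟩ hkt1
      linarith
    · exfalso
      have hmin : ‖k p - k 0‖ ≤ ‖k (t 1) - k 0‖ := hpmin (t 1) ⟨ht1, ht1p⟩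
      rw [h] at hlast
      have hrev : ‖k 0 - k (t 1)‖ = ‖k (t 1) - k 0‖ := norm_sub_rev _ _
      have hpos : 0 < lam * (‖k (a (n - 1)) - k 0‖ - ε) :=
        mul_pos hlampos (by linarith)
      linarith [hlast, hmin, hrev, hpos]
  have hcε : ‖k 0 - k (t 1)‖ = ε := by
    rw [ht1a, ← ha0]
    exact hchain 0 (by omega)
  -- induction along the chain
  intro i
  induction i with
  | zero => omega
  | succ m ih =>
    intro h1 h2
    by_cases hm : m = 0
    · subst hm; exact ht1a
    · have htm : t m = a m := ih (by omega) (by omega)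
      have hch1 : ‖k (a m) - k (t (m + 1))‖ = ε := by
        rw [← htm, hch m (by omega) (by omega), hcε]
      have hrange : t (m + 1) ∈ Set.Ico (0 : ℝ) 1 := by
        constructor
        · have := htle (m + 1) (by omega) 1 (le_refl _) (by omega)
          linarith
        · have := htle (n - 1) (le_refl _) (m + 1) (by omega) (by omega)
          linarith
      rcases huniq m (by omega) (by omega) (t (m + 1)) hrange hch1 with h | h
      · exfalso
        have ha1' : a (m - 1) < a m := haij (m - 1) m (by omega) (by omega)
        have ht2 : t m ≤ t (m + 1) := by
          simpa using htmono (m + 1) (by omega) (by omega)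
        rw [htm, h] at ht2
        linarith
      · exact h
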